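/- Let 0 < p₁, p₂ < ∞, ϱ = min(1, p₁/p₂), s₁ ∈ ℝ, φ₁ ∈ 𝒢_{p₁}, φ₂ ∈ 𝒢_{p₂} with φ₁(1) = φ₂(1) = 1, and suppose there is c > 0 with φ₂(t) ≥ c φ₁(t)^ϱ for all t ∈ (0,1). Define σ(s₁) = sup{ s : sup_j 2^{j(s−s₁)} φ₁(2^{-j})^{ϱ−1} < ∞ } and σ̄(s₁) = sup{ s : sup_j 2^{j(s−σ(s₁))} φ₂(2^{-j})/φ₁(2^{-j})^ϱ < ∞ }. Then s₁ − d/p₁ ≤ σ̄(s₁) ≤ σ(s₁) ≤ s₁. -/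

import Mathlib

def inG (d : ℕ) (p : ℝ) (φ : ℝ → ℝ) : Prop :=
  (∀ t : ℝ, 0 < t → 0 < φ t) ∧
  (∀ t s : ℝ, 0 < t → t ≤ s → φ t ≤ φ s) ∧
  (∀ t s : ℝ, 0 < t → t ≤ s → s ^ (-(d : ℝ) / p) * φ s ≤ t ^ (-(d : ℝ) / p) * φ t)

/-- If `2 ^ (j * b) ≤ C` for all naturals `j`, then `b ≤ 0`. -/
lemma exp_bdd_nonpos (b C : ℝ) (h : ∀ j : ℕ, (2:ℝ) ^ ((j : ℝ) * b) ≤ C) : b ≤ 0 := by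
  by_contra hb
  push_neg at hb
  have hlog : 0 < Real.log 2 := Real.log_pos (by norm_num)
  obtain ⟨n, hn⟩ := exists_nat_gt (C / (b * Real.log 2))
  have h1 : Real.log 2 * ((n : ℝ) * b) + 1 ≤ (2:ℝ) ^ ((n : ℝ) * b) := by
    rw [Real.rpow_def_of_pos (by norm_num)]
    exact Real.add_one_le_exp _
  rw [div_lt_iff₀ (by positivity)] at hn
  nlinarith [h n]

theorem stmt_14 (d : ℕ) (p₁ p₂ s₁ ϱ : ℝ) (hp₁ : 0 < p₁) (hp₂ : 0 < p₂)
    (hϱ : ϱ = min 1 (p₁ / p₂))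
    (φ₁ φ₂ : ℝ → ℝ) (h₁ : inG d p₁ φ₁) (h₂ : inG d p₂ φ₂)
    (hφ₁1 : φ₁ 1 = 1) (hφ₂1 : φ₂ 1 = 1)
    (hc : ∃ c : ℝ, 0 < c ∧ ∀ t : ℝ, 0 < t → t < 1 → c * φ₁ t ^ ϱ ≤ φ₂ t) :
    let σ : ℝ := sSup {s : ℝ | ∃ C : ℝ, ∀ j : ℕ,
      (2 : ℝ) ^ ((j : ℝ) * (s - s₁)) * φ₁ ((2 : ℝ) ^ (-(j : ℝ))) ^ (ϱ - 1) ≤ C}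
    let σb : ℝ := sSup {s : ℝ | ∃ C : ℝ, ∀ j : ℕ,
      (2 : ℝ) ^ ((j : ℝ) * (s - σ)) *
        (φ₂ ((2 : ℝ) ^ (-(j : ℝ))) / φ₁ ((2 : ℝ) ^ (-(j : ℝ))) ^ ϱ) ≤ C}
    s₁ - (d : ℝ) / p₁ ≤ σb ∧ σb ≤ σ ∧ σ ≤ s₁ := by
  intro σ σb
  obtain ⟨hpos₁, hmono₁, hdec₁⟩ := h₁
  obtain ⟨hpos₂, hmono₂, hdec₂⟩ := h₂
  obtain ⟨c, hcpos, hcle⟩ := hc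
  have hϱpos : 0 < ϱ := by rw [hϱ]; exact lt_min one_pos (div_pos hp₁ hp₂)
  have hϱle1 : ϱ ≤ 1 := by rw [hϱ]; exact min_le_left _ _
  set D : ℝ := (d : ℝ) / p₁ with hD
  have hDnn : 0 ≤ D := by positivity
  have htpos : ∀ j : ℕ, (0:ℝ) < 2 ^ (-(j:ℝ)) := fun j => Real.rpow_pos_of_pos two_pos _
  have htle1 : ∀ j : ℕ, (2:ℝ) ^ (-(j:ℝ)) ≤ 1 := fun j =>
    Real.rpow_le_one_of_one_le_of_nonpos one_le_two (by simp)
  have hψ₁pos : ∀ j : ℕ, 0 < φ₁ ((2:ℝ) ^ (-(j:ℝ))) := fun j => hpos₁ _ (htpos j)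
  have hψ₂pos : ∀ j : ℕ, 0 < φ₂ ((2:ℝ) ^ (-(j:ℝ))) := fun j => hpos₂ _ (htpos j)
  have hψ₁le1 : ∀ j : ℕ, φ₁ ((2:ℝ) ^ (-(j:ℝ))) ≤ 1 := fun j =>
    hφ₁1 ▸ hmono₁ _ 1 (htpos j) (htle1 j)
  have hψ₂le1 : ∀ j : ℕ, φ₂ ((2:ℝ) ^ (-(j:ℝ))) ≤ 1 := fun j =>
    hφ₂1 ▸ hmono₂ _ 1 (htpos j) (htle1 j)
  -- lower bound for φ₁ at 2^(-j)
  have hψ₁ge : ∀ j : ℕ, (2:ℝ) ^ (-((j:ℝ) * D)) ≤ φ₁ ((2:ℝ) ^ (-(j:ℝ))) := by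
    intro j
    have h0 := hdec₁ ((2:ℝ) ^ (-(j:ℝ))) 1 (htpos j) (htle1 j)
    rw [Real.one_rpow, one_mul, hφ₁1,
      ← Real.rpow_mul (by norm_num : (0:ℝ) ≤ 2)] at h0
    have he : -(j:ℝ) * (-(d:ℝ) / p₁) = (j:ℝ) * D := by rw [hD]; ring
    rw [he] at h0
    have key : (2:ℝ) ^ (-((j:ℝ) * D)) * ((2:ℝ) ^ ((j:ℝ) * D) *
        φ₁ ((2:ℝ) ^ (-(j:ℝ)))) = φ₁ ((2:ℝ) ^ (-(j:ℝ))) := by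
      rw [← mul_assoc, ← Real.rpow_add two_pos]; simp
    calc (2:ℝ) ^ (-((j:ℝ) * D)) = (2:ℝ) ^ (-((j:ℝ) * D)) * 1 := (mul_one _).symm
      _ ≤ (2:ℝ) ^ (-((j:ℝ) * D)) * ((2:ℝ) ^ ((j:ℝ) * D) * φ₁ ((2:ℝ) ^ (-(j:ℝ)))) :=
        mul_le_mul_of_nonneg_left h0 (Real.rpow_nonneg (by norm_num) _)
      _ = _ := key
  set S₁ : Set ℝ := {s : ℝ | ∃ C : ℝ, ∀ j : ℕ,
      (2 : ℝ) ^ ((j : ℝ) * (s - s₁)) * φ₁ ((2 : ℝ) ^ (-(j : ℝ))) ^ (ϱ - 1) ≤ C} with hS₁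
  -- a member of S₁
  have hamem : s₁ - (1 - ϱ) * D ∈ S₁ := by
    refine ⟨1, fun j => ?_⟩
    have hb : φ₁ ((2:ℝ) ^ (-(j:ℝ))) ^ (ϱ - 1) ≤ ((2:ℝ) ^ (-((j:ℝ) * D))) ^ (ϱ - 1) :=
      Real.rpow_le_rpow_of_nonpos (Real.rpow_pos_of_pos two_pos _) (hψ₁ge j)
        (by linarith)
    calc (2 : ℝ) ^ ((j : ℝ) * (s₁ - (1 - ϱ) * D - s₁)) * φ₁ ((2 : ℝ) ^ (-(j : ℝ))) ^ (ϱ - 1)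
        ≤ (2 : ℝ) ^ ((j : ℝ) * (s₁ - (1 - ϱ) * D - s₁)) * ((2:ℝ) ^ (-((j:ℝ) * D))) ^ (ϱ - 1) :=
          mul_le_mul_of_nonneg_left hb (Real.rpow_nonneg (by norm_num) _)
      _ = (2 : ℝ) ^ ((j : ℝ) * (s₁ - (1 - ϱ) * D - s₁)) * (2:ℝ) ^ (-((j:ℝ) * D) * (ϱ - 1)) := by
          rw [← Real.rpow_mul (by norm_num : (0:ℝ) ≤ 2)]
      _ = (2 : ℝ) ^ ((j : ℝ) * (s₁ - (1 - ϱ) * D - s₁) + -((j:ℝ) * D) * (ϱ - 1)) :=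
          (Real.rpow_add two_pos _ _).symm
      _ = (2 : ℝ) ^ (0:ℝ) := by congr 1; ring
      _ = 1 := Real.rpow_zero 2
  -- s₁ is an upper bound of S₁
  have hub₁ : ∀ s ∈ S₁, s ≤ s₁ := by
    intro s hs
    obtain ⟨C, hC⟩ := hs
    have h0 : ∀ j : ℕ, (2:ℝ) ^ ((j:ℝ) * (s - s₁)) ≤ C := by
      intro j
      have hge1 : 1 ≤ φ₁ ((2:ℝ) ^ (-(j:ℝ))) ^ (ϱ - 1) :=
        Real.one_le_rpow_of_pos_of_le_one_of_nonpos (hψ₁pos j) (hψ₁le1 j) (by linarith)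
      calc (2:ℝ) ^ ((j:ℝ) * (s - s₁)) = (2:ℝ) ^ ((j:ℝ) * (s - s₁)) * 1 := (mul_one _).symm
        _ ≤ (2:ℝ) ^ ((j:ℝ) * (s - s₁)) * φ₁ ((2:ℝ) ^ (-(j:ℝ))) ^ (ϱ - 1) :=
            mul_le_mul_of_nonneg_left hge1 (Real.rpow_nonneg (by norm_num) _)
        _ ≤ C := hC j
    linarith [exp_bdd_nonpos (s - s₁) C h0]
  have hbdd₁ : BddAbove S₁ := ⟨s₁, hub₁⟩
  have hne₁ : S₁.Nonempty := ⟨_, hamem⟩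
  have hσ_le : σ ≤ s₁ := csSup_le hne₁ hub₁
  have hσ_ge : s₁ - (1 - ϱ) * D ≤ σ := le_csSup hbdd₁ hamem
  -- the second set
  set S₂ : Set ℝ := {s : ℝ | ∃ C : ℝ, ∀ j : ℕ,
      (2 : ℝ) ^ ((j : ℝ) * (s - σ)) *
        (φ₂ ((2 : ℝ) ^ (-(j : ℝ))) / φ₁ ((2 : ℝ) ^ (-(j : ℝ))) ^ ϱ) ≤ C} with hS₂
  set c' : ℝ := min c 1 with hc'
  have hc'pos : 0 < c' := lt_min hcpos one_pos
  -- lower bound for the ratio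
  have hratio_ge : ∀ j : ℕ, c' ≤ φ₂ ((2:ℝ) ^ (-(j:ℝ))) / φ₁ ((2:ℝ) ^ (-(j:ℝ))) ^ ϱ := by
    intro j
    have hψ₁ϱpos : 0 < φ₁ ((2:ℝ) ^ (-(j:ℝ))) ^ ϱ := Real.rpow_pos_of_pos (hψ₁pos j) _
    rw [le_div_iff₀ hψ₁ϱpos]
    rcases Nat.eq_zero_or_pos j with hj | hj
    · subst hj
      simp only [Nat.cast_zero, neg_zero, Real.rpow_zero, hφ₁1, hφ₂1, Real.one_rpow, mul_one]
      exact min_le_right c 1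
    · have ht1 : (2:ℝ) ^ (-(j:ℝ)) < 1 := by
        apply Real.rpow_lt_one_of_one_lt_of_neg one_lt_two
        simpa using (Nat.cast_pos (α := ℝ)).mpr hj
      calc c' * φ₁ ((2:ℝ) ^ (-(j:ℝ))) ^ ϱ ≤ c * φ₁ ((2:ℝ) ^ (-(j:ℝ))) ^ ϱ :=
            mul_le_mul_of_nonneg_right (min_le_left c 1) hψ₁ϱpos.le
        _ ≤ φ₂ ((2:ℝ) ^ (-(j:ℝ))) := hcle _ (htpos j) ht1
  -- upper bound for the ratio
  have hratio_le : ∀ j : ℕ, φ₂ ((2:ℝ) ^ (-(j:ℝ))) / φ₁ ((2:ℝ) ^ (-(j:ℝ))) ^ ϱ ≤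
      (2:ℝ) ^ ((j:ℝ) * D * ϱ) := by
    intro j
    have hψ₁ϱpos : 0 < φ₁ ((2:ℝ) ^ (-(j:ℝ))) ^ ϱ := Real.rpow_pos_of_pos (hψ₁pos j) _
    rw [div_le_iff₀ hψ₁ϱpos]
    have hlow : (2:ℝ) ^ (-((j:ℝ) * D) * ϱ) ≤ φ₁ ((2:ℝ) ^ (-(j:ℝ))) ^ ϱ := by
      rw [Real.rpow_mul (by norm_num : (0:ℝ) ≤ 2)]
      exact Real.rpow_le_rpow (Real.rpow_nonneg (by norm_num) _) (hψ₁ge j) hϱpos.le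
    calc φ₂ ((2:ℝ) ^ (-(j:ℝ))) ≤ 1 := hψ₂le1 j
      _ = (2:ℝ) ^ ((j:ℝ) * D * ϱ) * (2:ℝ) ^ (-((j:ℝ) * D) * ϱ) := by
          rw [← Real.rpow_add two_pos]
          norm_num
      _ ≤ (2:ℝ) ^ ((j:ℝ) * D * ϱ) * φ₁ ((2:ℝ) ^ (-(j:ℝ))) ^ ϱ :=
          mul_le_mul_of_nonneg_left hlow (Real.rpow_nonneg (by norm_num) _)
  -- a member of S₂
  have hbmem : σ - ϱ * D ∈ S₂ := by
    refine ⟨1, fun j => ?_⟩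
    calc (2 : ℝ) ^ ((j : ℝ) * (σ - ϱ * D - σ)) *
          (φ₂ ((2:ℝ) ^ (-(j:ℝ))) / φ₁ ((2:ℝ) ^ (-(j:ℝ))) ^ ϱ)
        ≤ (2 : ℝ) ^ ((j : ℝ) * (σ - ϱ * D - σ)) * (2:ℝ) ^ ((j:ℝ) * D * ϱ) :=
          mul_le_mul_of_nonneg_left (hratio_le j) (Real.rpow_nonneg (by norm_num) _)
      _ = (2 : ℝ) ^ ((j : ℝ) * (σ - ϱ * D - σ) + (j:ℝ) * D * ϱ) :=
          (Real.rpow_add two_pos _ _).symm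
      _ = (2 : ℝ) ^ (0:ℝ) := by congr 1; ring
      _ = 1 := Real.rpow_zero 2
  -- σ is an upper bound of S₂
  have hub₂ : ∀ s ∈ S₂, s ≤ σ := by
    intro s hs
    obtain ⟨C, hC⟩ := hs
    have h0 : ∀ j : ℕ, (2:ℝ) ^ ((j:ℝ) * (s - σ)) ≤ C / c' := by
      intro j
      rw [le_div_iff₀ hc'pos]
      calc (2:ℝ) ^ ((j:ℝ) * (s - σ)) * c'
          ≤ (2:ℝ) ^ ((j:ℝ) * (s - σ)) *
            (φ₂ ((2:ℝ) ^ (-(j:ℝ))) / φ₁ ((2:ℝ) ^ (-(j:ℝ))) ^ ϱ) :=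
            mul_le_mul_of_nonneg_left (hratio_ge j) (Real.rpow_nonneg (by norm_num) _)
        _ ≤ C := hC j
    linarith [exp_bdd_nonpos (s - σ) (C / c') h0]
  have hbdd₂ : BddAbove S₂ := ⟨σ, hub₂⟩
  have hσb_le : σb ≤ σ := csSup_le ⟨_, hbmem⟩ hub₂
  have hσb_ge : σ - ϱ * D ≤ σb := le_csSup hbdd₂ hbmem
  have hfinal : s₁ - D ≤ σb := by linarith
  exact ⟨hfinal, hσb_le, hσ_le⟩
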